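/- Let d ≥ 1 and let Φ : M_d(ℂ) → M_d(ℂ) be a linear map. Then: (i) for all density matrices ρ, σ ∈ M_d(ℂ), ‖Φ(ρ) − Φ(σ)‖₁ ≤ ‖ρ − σ‖₁ · sup_{‖x‖ = 1} ‖Φ(|x⟩⟨x|) − 𝟙_d/d‖₁, the supremum over unit vectors x ∈ ℂ^d; and (ii) sup_{‖x‖=1} ‖Φ(|x⟩⟨x|) − 𝟙_d/d‖₁ ≤ ‖Φ − Φ_*‖_◇, where Φ_*(X) = Tr(X)·𝟙_d/d is the maximally depolarizing channel and ‖Ψ‖_◇ := sup{ ‖(Ψ ⊗ id_d)(X)‖₁ / ‖X‖₁ : 0 ≠ X ∈ M_{d²}(ℂ) } is the diamond norm. Consequently, the trace-norm Lipschitz constant of Φ on the set of density matrices is at most ‖Φ − Φ_*‖_◇. -/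

import Mathlib

open Matrix
open scoped ComplexOrder

noncomputable section

/-- The trace (Schatten 1-) norm of a complex matrix: `‖A‖₁ = Tr √(A†A)`. -/
def traceNorm {n : Type*} [Fintype n] [DecidableEq n] (A : Matrix n n ℂ) : ℝ :=
  ((Matrix.posSemidef_conjTranspose_mul_self A).1.eigenvectorUnitary.1 *
    diagonal (((↑) : ℝ → ℂ) ∘ (√·) ∘ (Matrix.posSemidef_conjTranspose_mul_self A).1.eigenvalues) *
    (star (Matrix.posSemidef_conjTranspose_mul_self A).1.eigenvectorUnitary : Matrix n n ℂ)).trace.re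

/-- The extension `Ψ ⊗ id_d` of a linear map on `M_d(ℂ)` to `M_{d²}(ℂ) ≅ M_d(ℂ) ⊗ M_d(ℂ)`,
acting on the first tensor factor. -/
def tensorId (d : ℕ) (Ψ : Matrix (Fin d) (Fin d) ℂ →ₗ[ℂ] Matrix (Fin d) (Fin d) ℂ)
    (X : Matrix (Fin d × Fin d) (Fin d × Fin d) ℂ) :
    Matrix (Fin d × Fin d) (Fin d × Fin d) ℂ :=
  Matrix.of fun p q => Ψ (Matrix.of fun a b => X (a, p.2) (b, q.2)) p.1 q.1

/-- The diamond norm `‖Ψ‖_◇ = sup_{X ≠ 0} ‖(Ψ ⊗ id_d)(X)‖₁ / ‖X‖₁`. -/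
def diamondNorm (d : ℕ) (Ψ : Matrix (Fin d) (Fin d) ℂ →ₗ[ℂ] Matrix (Fin d) (Fin d) ℂ) : ℝ :=
  ⨆ X : {X : Matrix (Fin d × Fin d) (Fin d × Fin d) ℂ // X ≠ 0},
    traceNorm (tensorId d Ψ X.1) / traceNorm X.1

/-- The maximally depolarizing channel `Φ_*(X) = Tr(X)·𝟙_d/d` as a linear map. -/
def depolarizing (d : ℕ) : Matrix (Fin d) (Fin d) ℂ →ₗ[ℂ] Matrix (Fin d) (Fin d) ℂ :=
  (Matrix.traceLinearMap (Fin d) ℂ ℂ).smulRight ((d : ℂ)⁻¹ • (1 : Matrix (Fin d) (Fin d) ℂ))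

section SqrtAux
open scoped MatrixOrder

def Matrix.PosSemidef.sqrt {n : Type*} [Fintype n] [DecidableEq n] {A : Matrix n n ℂ}
    (hA : A.PosSemidef) : Matrix n n ℂ :=
  hA.1.eigenvectorUnitary.1 * diagonal (((↑) : ℝ → ℂ) ∘ (√·) ∘ hA.1.eigenvalues) *
    (star hA.1.eigenvectorUnitary : Matrix n n ℂ)

lemma Matrix.PosSemidef.sqrt_eq_cfc {n : Type*} [Fintype n] [DecidableEq n] {A : Matrix n n ℂ}
    (hA : A.PosSemidef) : hA.sqrt = CFC.sqrt A := by
  rw [CFC.sqrt_eq_real_sqrt A (nonneg_iff_posSemidef.mpr hA), cfcₙ_eq_cfc, hA.1.cfc_eq]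
  rfl

lemma Matrix.PosSemidef.posSemidef_sqrt {n : Type*} [Fintype n] [DecidableEq n]
    {A : Matrix n n ℂ} (hA : A.PosSemidef) : hA.sqrt.PosSemidef :=
  nonneg_iff_posSemidef.mp (by rw [hA.sqrt_eq_cfc]; exact CFC.sqrt_nonneg A)

lemma Matrix.PosSemidef.sqrt_mul_self {n : Type*} [Fintype n] [DecidableEq n]
    {A : Matrix n n ℂ} (hA : A.PosSemidef) : hA.sqrt * hA.sqrt = A := by
  rw [hA.sqrt_eq_cfc]
  exact CFC.sqrt_mul_sqrt_self A (nonneg_iff_posSemidef.mpr hA)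

lemma Matrix.PosSemidef.eq_sqrt_of_sq_eq {n : Type*} [Fintype n] [DecidableEq n]
    {A B : Matrix n n ℂ} (hB : B.PosSemidef) (hA : A.PosSemidef) (h : B ^ 2 = A) :
    B = hA.sqrt := by
  rw [hA.sqrt_eq_cfc]
  exact (CFC.sqrt_unique (by rw [← pow_two]; exact h) (nonneg_iff_posSemidef.mpr hB)).symm

lemma traceNorm_eq {n : Type*} [Fintype n] [DecidableEq n] (A : Matrix n n ℂ) :
    traceNorm A = (Matrix.posSemidef_conjTranspose_mul_self A).sqrt.trace.re := rfl

end SqrtAux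

namespace TN

set_option linter.unusedSectionVars false

variable {n : Type*} [Fintype n] [DecidableEq n]
variable {m : Type*} [Fintype m] [DecidableEq m]

/-! ### generalities -/

lemma dot_self_re (u : n → ℂ) : (star u ⬝ᵥ u).re = ∑ i, ‖u i‖^2 := by
  rw [dotProduct, Complex.re_sum]
  apply Finset.sum_congr rfl
  intro i _
  rw [Pi.star_apply, RCLike.star_def, ← Complex.normSq_eq_conj_mul_self]
  simp [Complex.sq_norm]

lemma dot_self_normSq (u : n → ℂ) : (star u ⬝ᵥ u).re = ∑ i, Complex.normSq (u i) := by
  rw [dot_self_re]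
  apply Finset.sum_congr rfl
  intro i _
  rw [Complex.sq_norm]

lemma abs_dotProduct_le (u v : n → ℂ) :
    ‖star u ⬝ᵥ v‖ ≤ Real.sqrt (star u ⬝ᵥ u).re * Real.sqrt (star v ⬝ᵥ v).re := by
  have h := norm_inner_le_norm (𝕜 := ℂ) ((WithLp.equiv 2 (n → ℂ)).symm u)
    ((WithLp.equiv 2 (n → ℂ)).symm v)
  change ‖inner ℂ (WithLp.toLp 2 u) (WithLp.toLp 2 v)‖ ≤ ‖WithLp.toLp 2 u‖ * ‖WithLp.toLp 2 v‖ at h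
  rw [EuclideanSpace.inner_toLp_toLp, dotProduct_comm] at h
  refine le_trans h (le_of_eq ?_)
  rw [EuclideanSpace.norm_eq, EuclideanSpace.norm_eq, dot_self_re, dot_self_re]

lemma trace_vecMulVec_mul (a b : n → ℂ) (C : Matrix n n ℂ) :
    (vecMulVec a b * C).trace = b ⬝ᵥ (C *ᵥ a) := by
  simp only [Matrix.trace, Matrix.diag, mul_apply, vecMulVec_apply, dotProduct, mulVec,
    Finset.mul_sum, Finset.sum_mul]
  rw [Finset.sum_comm]
  apply Finset.sum_congr rfl; intro a' _
  apply Finset.sum_congr rfl; intro b' _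
  ring

lemma vecMulVec_mulVec (a b v : n → ℂ) : (vecMulVec a b) *ᵥ v = (b ⬝ᵥ v) • a := by
  funext x
  simp only [mulVec, vecMulVec_apply, dotProduct, Pi.smul_apply, smul_eq_mul, Finset.sum_mul]
  apply Finset.sum_congr rfl; intro b' _
  ring

lemma vecMulVec_conjTranspose (a b : n → ℂ) : (vecMulVec a b)ᴴ = vecMulVec (star b) (star a) := by
  ext x y
  simp [vecMulVec_apply, conjTranspose_apply, mul_comm]

lemma dotProduct_sum' {ι : Type*} (s : Finset ι) (v : n → ℂ) (f : ι → (n → ℂ)) :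
    v ⬝ᵥ (∑ i ∈ s, f i) = ∑ i ∈ s, v ⬝ᵥ f i := by
  simp only [dotProduct, Finset.sum_apply, Finset.mul_sum]
  rw [Finset.sum_comm]

lemma sum_dotProduct' {ι : Type*} (s : Finset ι) (f : ι → (n → ℂ)) (v : n → ℂ) :
    (∑ i ∈ s, f i) ⬝ᵥ v = ∑ i ∈ s, f i ⬝ᵥ v := by
  simp only [dotProduct, Finset.sum_apply, Finset.sum_mul]
  rw [Finset.sum_comm]

lemma sum_mulVec' {ι : Type*} (s : Finset ι) (f : ι → Matrix n n ℂ) (v : n → ℂ) :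
    (∑ i ∈ s, f i) *ᵥ v = ∑ i ∈ s, (f i *ᵥ v) := by
  funext x
  simp only [mulVec, dotProduct, Matrix.sum_apply, Finset.sum_mul, Finset.sum_apply]
  rw [Finset.sum_comm]

lemma quad_eq (U B : Matrix n n ℂ) (i j : n) :
    star (fun a => U a i) ⬝ᵥ (B *ᵥ fun a => U a j) = (star U * B * U) i j := by
  simp only [mul_apply, mulVec, dotProduct, Pi.star_apply, RCLike.star_def, Finset.sum_mul,
    Finset.mul_sum, star_apply]
  rw [Finset.sum_comm]
  apply Finset.sum_congr rfl; intro a _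
  apply Finset.sum_congr rfl; intro b _
  ring

lemma star_mulVec_dotProduct (B : Matrix n n ℂ) (v w : n → ℂ) :
    star (B *ᵥ v) ⬝ᵥ (B *ᵥ w) = star v ⬝ᵥ ((Bᴴ * B) *ᵥ w) := by
  rw [star_mulVec, dotProduct_mulVec, dotProduct_mulVec, vecMul_vecMul]

lemma trace_unitary_conj {U : Matrix n n ℂ} (hU : star U * U = 1) (D : Matrix n n ℂ) :
    (U * D * star U).trace = D.trace := by
  rw [trace_mul_cycle, hU, one_mul]

lemma conj_mul_conj {U : Matrix n n ℂ} (h : star U * U = 1) (B C : Matrix n n ℂ) :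
    (U * B * star U) * (U * C * star U) = U * (B * C) * star U := by
  have e : (U * B * star U) * (U * C * star U) = U * B * (star U * U) * C * star U := by
    simp only [mul_assoc]
  rw [e, h, mul_one, mul_assoc U B C]

lemma sqrt_unique {A B : Matrix n n ℂ} (hA : A.PosSemidef) (hB : B.PosSemidef)
    (h : B * B = A) : hA.sqrt = B :=
  (hB.eq_sqrt_of_sq_eq hA (by rw [pow_two, h])).symm

lemma traceNorm_of_eq_sqrt {A B : Matrix n n ℂ} (hB : B.PosSemidef) (h : B * B = Aᴴ * A) :
    traceNorm A = B.trace.re := by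
  rw [traceNorm_eq]
  rw [sqrt_unique (Matrix.posSemidef_conjTranspose_mul_self A) hB h]

/-! ### singular value data -/

lemma exists_sv (A : Matrix n n ℂ) :
    ∃ (s : n → ℝ) (U : Matrix n n ℂ),
      (∀ i, 0 ≤ s i) ∧
      star U * U = 1 ∧ U * star U = 1 ∧
      traceNorm A = ∑ i, s i ∧
      Aᴴ * A = U * Matrix.diagonal (fun i => ((s i : ℂ))^2) * star U := by
  have hA := Matrix.posSemidef_conjTranspose_mul_self A
  have hH := hA.posSemidef_sqrt
  have hHerm : (hA.sqrt).IsHermitian := hH.1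
  set U : Matrix n n ℂ := (hHerm.eigenvectorUnitary : Matrix n n ℂ) with hU
  have h2 : U * star U = 1 := Matrix.mem_unitaryGroup_iff.mp (hHerm.eigenvectorUnitary).2
  have h1 : star U * U = 1 := mul_eq_one_comm.mp h2
  have hspec : hA.sqrt = U * Matrix.diagonal (RCLike.ofReal ∘ hHerm.eigenvalues) * star U :=
    hHerm.spectral_theorem
  refine ⟨hHerm.eigenvalues, U, hH.eigenvalues_nonneg, h1, h2, ?_, ?_⟩
  · rw [traceNorm_eq]
    conv_lhs => rw [hspec]
    rw [trace_unitary_conj h1, trace_diagonal, Complex.re_sum]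
    apply Finset.sum_congr rfl; intro i _; rfl
  · conv_lhs => rw [← hA.sqrt_mul_self, hspec]
    rw [conj_mul_conj h1, diagonal_mul_diagonal]
    congr 2
    funext i
    simp [pow_two]

lemma re_trace_mul_le (A M : Matrix n n ℂ)
    (hM : ∀ v : n → ℂ, (star (Mᴴ *ᵥ v) ⬝ᵥ (Mᴴ *ᵥ v)).re ≤ (star v ⬝ᵥ v).re) :
    ((M * A).trace).re ≤ traceNorm A := by
  obtain ⟨s, U, hs, h1, h2, htn, hAA⟩ := exists_sv A
  have hD : star U * (U * Matrix.diagonal (fun i => ((s i : ℂ))^2) * star U) * U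
      = Matrix.diagonal (fun i => ((s i : ℂ))^2) := by
    rw [← mul_assoc, ← mul_assoc, h1, one_mul, mul_assoc, h1, mul_one]
  have hone : ∀ i, star (fun a => U a i) ⬝ᵥ (fun a => U a i) = 1 := by
    intro i
    have q := quad_eq U (1 : Matrix n n ℂ) i i
    rw [one_mulVec] at q
    rw [q, mul_one, h1, one_apply_eq]
  have hAu : ∀ i, star (A *ᵥ fun a => U a i) ⬝ᵥ (A *ᵥ fun a => U a i) = ((s i : ℂ))^2 := by
    intro i
    rw [star_mulVec_dotProduct, quad_eq, hAA, hD, diagonal_apply_eq]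
  have htr : (M * A).trace = ∑ i, star (fun a => U a i) ⬝ᵥ ((M * A) *ᵥ fun a => U a i) := by
    have e1 : (star U * (M * A) * U).trace = (M * A).trace := by
      rw [trace_mul_cycle, ← mul_assoc, h2, one_mul]
    rw [← e1]
    simp only [Matrix.trace, Matrix.diag]
    apply Finset.sum_congr rfl; intro i _
    exact (quad_eq U (M * A) i i).symm
  rw [htr, Complex.re_sum, htn]
  apply Finset.sum_le_sum
  intro i _
  have e2 : star (fun a => U a i) ⬝ᵥ ((M * A) *ᵥ fun a => U a i)
      = star (Mᴴ *ᵥ fun a => U a i) ⬝ᵥ (A *ᵥ fun a => U a i) := by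
    rw [← mulVec_mulVec, dotProduct_mulVec, star_mulVec, conjTranspose_conjTranspose,
      dotProduct_mulVec]
  rw [e2]
  refine le_trans (Complex.re_le_norm _) (le_trans (abs_dotProduct_le _ _) ?_)
  have b2 : Real.sqrt (star (A *ᵥ fun a => U a i) ⬝ᵥ (A *ᵥ fun a => U a i)).re = s i := by
    rw [hAu i]
    have : (((s i : ℂ))^2).re = (s i)^2 := by
      rw [← Complex.ofReal_pow]
      rfl
    rw [this, Real.sqrt_sq (hs i)]
  rw [b2]
  have b1 : Real.sqrt (star (Mᴴ *ᵥ fun a => U a i) ⬝ᵥ (Mᴴ *ᵥ fun a => U a i)).re ≤ 1 := by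
    refine le_trans (Real.sqrt_le_sqrt (hM _)) ?_
    rw [hone i]
    simp
  calc Real.sqrt (star (Mᴴ *ᵥ fun a => U a i) ⬝ᵥ (Mᴴ *ᵥ fun a => U a i)).re * s i
      ≤ 1 * s i := mul_le_mul_of_nonneg_right b1 (hs i)
    _ = s i := one_mul _

lemma exists_dual_witness (A : Matrix n n ℂ) :
    ∃ M : Matrix n n ℂ,
      (∀ v : n → ℂ, (star (Mᴴ *ᵥ v) ⬝ᵥ (Mᴴ *ᵥ v)).re ≤ (star v ⬝ᵥ v).re) ∧
      ((M * A).trace).re = traceNorm A := by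
  obtain ⟨s, U, hs, h1, h2, htn, hAA⟩ := exists_sv A
  have hD : star U * (U * Matrix.diagonal (fun i => ((s i : ℂ))^2) * star U) * U
      = Matrix.diagonal (fun i => ((s i : ℂ))^2) := by
    rw [← mul_assoc, ← mul_assoc, h1, one_mul, mul_assoc, h1, mul_one]
  have hAu2 : ∀ i j, star (A *ᵥ fun a => U a i) ⬝ᵥ (A *ᵥ fun a => U a j)
      = Matrix.diagonal (fun i => ((s i : ℂ))^2) i j := by
    intro i j
    rw [star_mulVec_dotProduct, quad_eq, hAA, hD]
  set u : n → n → ℂ := fun i a => U a i with hu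
  set c : n → ℝ := fun i => (s i)⁻¹ with hc
  have hcs : ∀ i, c i * (s i)^2 = s i := by
    intro i
    rcases eq_or_ne (s i) 0 with h | h
    · simp [hc, h]
    · rw [hc, sq, ← mul_assoc, inv_mul_cancel₀ h, one_mul]
  refine ⟨∑ i, ((c i : ℂ)) • vecMulVec (u i) (star (A *ᵥ u i)), ?_, ?_⟩
  · intro v
    have hMH : (∑ i, ((c i : ℂ)) • vecMulVec (u i) (star (A *ᵥ u i)))ᴴ
        = ∑ i, ((c i : ℂ)) • vecMulVec (A *ᵥ u i) (star (u i)) := by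
      rw [Matrix.conjTranspose_sum]
      apply Finset.sum_congr rfl; intro i _
      rw [conjTranspose_smul, vecMulVec_conjTranspose, star_star]
      congr 1
      exact Complex.conj_ofReal _
    rw [hMH, sum_mulVec']
    have hterm : ∀ i, (((c i : ℂ)) • vecMulVec (A *ᵥ u i) (star (u i))) *ᵥ v
        = ((c i : ℂ) * (star (u i) ⬝ᵥ v)) • (A *ᵥ u i) := by
      intro i
      rw [smul_mulVec, vecMulVec_mulVec, smul_smul]
    simp only [hterm]
    set t : n → ℂ := fun i => (c i : ℂ) * (star (u i) ⬝ᵥ v) with ht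
    have expand : star (∑ i, t i • (A *ᵥ u i)) ⬝ᵥ (∑ j, t j • (A *ᵥ u j))
        = ∑ i, ∑ j, star (t i) * (t j * (star (A *ᵥ u i) ⬝ᵥ (A *ᵥ u j))) := by
      rw [star_sum, sum_dotProduct']
      apply Finset.sum_congr rfl; intro i _
      rw [dotProduct_sum']
      apply Finset.sum_congr rfl; intro j _
      rw [star_smul, smul_dotProduct, dotProduct_smul]
      simp only [smul_eq_mul]
    rw [expand]
    have collapse : ∀ i, (∑ j, star (t i) * (t j * (star (A *ᵥ u i) ⬝ᵥ (A *ᵥ u j))))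
        = star (t i) * t i * ((s i : ℂ))^2 := by
      intro i
      rw [Finset.sum_eq_single i]
      · rw [hAu2 i i, diagonal_apply_eq]; ring
      · intro j _ hj
        rw [hAu2 i j, diagonal_apply_ne _ (Ne.symm hj)]
        ring
      · intro h; exact absurd (Finset.mem_univ i) h
    simp only [collapse, Complex.re_sum]
    have hterm2 : ∀ i, (star (t i) * t i * ((s i : ℂ))^2).re
        = Complex.normSq (t i) * (s i)^2 := by
      intro i
      rw [RCLike.star_def, ← Complex.normSq_eq_conj_mul_self, ← Complex.ofReal_pow,
        ← Complex.ofReal_mul, Complex.ofReal_re]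
    simp only [hterm2]
    have hbound : ∀ i, Complex.normSq (t i) * (s i)^2 ≤ Complex.normSq (star (u i) ⬝ᵥ v) := by
      intro i
      have htv : t i = ((c i : ℝ) : ℂ) * (star (u i) ⬝ᵥ v) := rfl
      rw [htv, Complex.normSq_mul, Complex.normSq_ofReal]
      rcases eq_or_ne (s i) 0 with h | h
      · simp [hc, h, Complex.normSq_nonneg]
      · refine le_of_eq ?_
        have hcs1 : c i * s i = 1 := inv_mul_cancel₀ h
        calc c i * c i * Complex.normSq (star (u i) ⬝ᵥ v) * (s i)^2
            = (c i * s i)^2 * Complex.normSq (star (u i) ⬝ᵥ v) := by ring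
          _ = Complex.normSq (star (u i) ⬝ᵥ v) := by rw [hcs1]; ring
    refine le_trans (Finset.sum_le_sum fun i _ => hbound i) (le_of_eq ?_)
    have e : ∀ i, star (u i) ⬝ᵥ v = (star U *ᵥ v) i := by
      intro i
      simp [mulVec, dotProduct, star_apply, hu]
    simp only [e]
    rw [← dot_self_normSq]
    rw [star_mulVec_dotProduct (star U) v v,
      show (star U)ᴴ = U from by rw [star_eq_conjTranspose, conjTranspose_conjTranspose],
      h2, one_mulVec]
  · rw [Finset.sum_mul, trace_sum]
    have e : ∀ i, ((((c i : ℂ)) • vecMulVec (u i) (star (A *ᵥ u i))) * A).trace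
        = (c i : ℂ) * ((s i : ℂ))^2 := by
      intro i
      rw [smul_mul_assoc, trace_smul, trace_vecMulVec_mul,
        show star (A *ᵥ u i) ⬝ᵥ (A *ᵥ u i) = ((s i : ℂ))^2 from by
          rw [hAu2 i i, diagonal_apply_eq], smul_eq_mul]
    simp only [e]
    rw [htn, Complex.re_sum]
    apply Finset.sum_congr rfl
    intro i _
    have e2 : (c i : ℂ) * ((s i : ℂ))^2 = ((c i * (s i)^2 : ℝ) : ℂ) := by push_cast; ring
    rw [e2, Complex.ofReal_re, hcs i]


/-! ### norm properties -/

lemma traceNorm_nonneg (A : Matrix n n ℂ) : 0 ≤ traceNorm A := by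
  obtain ⟨s, U, hs, _, _, htn, _⟩ := exists_sv A
  rw [htn]; exact Finset.sum_nonneg fun i _ => hs i

lemma traceNorm_zero : traceNorm (0 : Matrix n n ℂ) = 0 := by
  rw [traceNorm_of_eq_sqrt Matrix.PosSemidef.zero (by simp)]
  simp

lemma traceNorm_triangle (A B : Matrix n n ℂ) :
    traceNorm (A + B) ≤ traceNorm A + traceNorm B := by
  obtain ⟨M, hM, hMt⟩ := exists_dual_witness (A + B)
  have h1 := re_trace_mul_le A M hM
  have h2 := re_trace_mul_le B M hM
  have e : (M * (A + B)).trace = (M * A).trace + (M * B).trace := by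
    rw [mul_add, trace_add]
  rw [← hMt, e, Complex.add_re]
  linarith

lemma posSemidef_real_smul {A : Matrix n n ℂ} (hA : A.PosSemidef) {r : ℝ} (hr : 0 ≤ r) :
    (((r : ℂ)) • A).PosSemidef := by
  refine Matrix.PosSemidef.of_dotProduct_mulVec_nonneg ?_ ?_
  · show (((r : ℂ)) • A)ᴴ = ((r : ℂ)) • A
    rw [conjTranspose_smul, hA.1.eq, Complex.star_def, Complex.conj_ofReal]
  · intro x
    rw [smul_mulVec, dotProduct_smul, smul_eq_mul]
    exact mul_nonneg (by exact_mod_cast hr) (hA.dotProduct_mulVec_nonneg x)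

lemma traceNorm_smul (c : ℂ) (A : Matrix n n ℂ) :
    traceNorm (c • A) = ‖c‖ * traceNorm A := by
  have hA := Matrix.posSemidef_conjTranspose_mul_self A
  have hB : (((‖c‖ : ℝ) : ℂ) • hA.sqrt).PosSemidef :=
    posSemidef_real_smul hA.posSemidef_sqrt (norm_nonneg c)
  have hBB : (((‖c‖ : ℝ) : ℂ) • hA.sqrt) * (((‖c‖ : ℝ) : ℂ) • hA.sqrt)
      = (c • A)ᴴ * (c • A) := by
    rw [smul_mul_assoc, mul_smul_comm, smul_smul, hA.sqrt_mul_self]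
    rw [conjTranspose_smul, smul_mul_assoc, mul_smul_comm, smul_smul]
    congr 1
    rw [Complex.star_def, ← Complex.normSq_eq_conj_mul_self, ← Complex.ofReal_mul,
      ← Complex.sq_norm, pow_two]
  rw [traceNorm_of_eq_sqrt hB hBB, trace_smul, smul_eq_mul, Complex.re_ofReal_mul]
  rfl

lemma traceNorm_neg (A : Matrix n n ℂ) : traceNorm (-A) = traceNorm A := by
  have : -A = ((-1 : ℂ)) • A := by simp
  rw [this, traceNorm_smul]
  simp

lemma traceNorm_sub_le (A B : Matrix n n ℂ) :
    traceNorm (A - B) ≤ traceNorm A + traceNorm B := by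
  rw [sub_eq_add_neg]
  exact le_trans (traceNorm_triangle A (-B)) (by rw [traceNorm_neg])

lemma traceNorm_sum_le {ι : Type*} (s : Finset ι) (f : ι → Matrix n n ℂ) :
    traceNorm (∑ i ∈ s, f i) ≤ ∑ i ∈ s, traceNorm (f i) := by
  classical
  induction s using Finset.induction_on with
  | empty => simp [traceNorm_zero]
  | insert _ _ h ih =>
    rw [Finset.sum_insert h, Finset.sum_insert h]
    exact le_trans (traceNorm_triangle _ _) (by linarith)

lemma traceNorm_of_posSemidef {A : Matrix n n ℂ} (hA : A.PosSemidef) :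
    traceNorm A = A.trace.re :=
  traceNorm_of_eq_sqrt hA (by rw [hA.1.eq])

/-! ### Hermitian decomposition -/

lemma unitary_diag_expand (U : Matrix n n ℂ) (f : n → ℂ) :
    U * Matrix.diagonal f * star U
      = ∑ i, f i • vecMulVec (fun a => U a i) (star fun a => U a i) := by
  ext x y
  rw [mul_apply]
  simp only [mul_diagonal, star_apply, Matrix.sum_apply, Matrix.smul_apply, vecMulVec_apply,
    Pi.star_apply, smul_eq_mul]
  apply Finset.sum_congr rfl
  intro j _
  ring

lemma isHermitian_decomp {A : Matrix n n ℂ} (hA : A.IsHermitian) :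
    ∃ (lam : n → ℝ) (u : n → n → ℂ),
      (∀ i, (∑ a, Complex.normSq (u i a)) = 1) ∧
      A = ∑ i, ((lam i : ℝ) : ℂ) • vecMulVec (u i) (star (u i)) ∧
      A.trace = ((∑ i, lam i : ℝ) : ℂ) ∧
      traceNorm A = ∑ i, |lam i| := by
  set U : Matrix n n ℂ := (hA.eigenvectorUnitary : Matrix n n ℂ) with hU
  have h2 : U * star U = 1 := Matrix.mem_unitaryGroup_iff.mp (hA.eigenvectorUnitary).2
  have h1 : star U * U = 1 := mul_eq_one_comm.mp h2
  have hspec : A = U * Matrix.diagonal (RCLike.ofReal ∘ hA.eigenvalues) * star U :=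
    hA.spectral_theorem
  refine ⟨hA.eigenvalues, fun i a => U a i, ?_, ?_, ?_, ?_⟩
  · intro i
    have h := congrArg (fun B => B i i) h1
    simp only [mul_apply, star_apply, one_apply_eq] at h
    have h' : ((∑ a, Complex.normSq (U a i) : ℝ) : ℂ) = 1 := by
      rw [← h, Complex.ofReal_sum]
      apply Finset.sum_congr rfl
      intro a _
      rw [Complex.star_def, Complex.normSq_eq_conj_mul_self]
    exact_mod_cast h'
  · conv_lhs => rw [hspec]
    rw [unitary_diag_expand]
    apply Finset.sum_congr rfl
    intro i _
    rfl
  · conv_lhs => rw [hspec]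
    rw [trace_unitary_conj h1, trace_diagonal]
    rw [Complex.ofReal_sum]
    rfl
  · have hd : (Matrix.diagonal fun i => ((|hA.eigenvalues i| : ℝ) : ℂ)).PosSemidef := by
      refine Matrix.PosSemidef.diagonal (Pi.le_def.mpr fun i => ?_)
      simp only [Pi.zero_apply]
      exact_mod_cast abs_nonneg (hA.eigenvalues i)
    have hB : (U * Matrix.diagonal (fun i => ((|hA.eigenvalues i| : ℝ) : ℂ)) * star U).PosSemidef := by
      have := hd.mul_mul_conjTranspose_same U
      simpa [star_eq_conjTranspose] using this
    have hBB : (U * Matrix.diagonal (fun i => ((|hA.eigenvalues i| : ℝ) : ℂ)) * star U)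
        * (U * Matrix.diagonal (fun i => ((|hA.eigenvalues i| : ℝ) : ℂ)) * star U) = Aᴴ * A := by
      rw [conj_mul_conj h1, diagonal_mul_diagonal]
      have e : Aᴴ * A = U * Matrix.diagonal (fun i =>
          (RCLike.ofReal ∘ hA.eigenvalues) i * (RCLike.ofReal ∘ hA.eigenvalues) i) * star U := by
        conv_lhs => rw [hA.eq, hspec]
        rw [conj_mul_conj h1, diagonal_mul_diagonal]
      have hfun : (fun i => ((|hA.eigenvalues i| : ℝ) : ℂ) * ((|hA.eigenvalues i| : ℝ) : ℂ))
          = fun i => (RCLike.ofReal ∘ hA.eigenvalues) i * (RCLike.ofReal ∘ hA.eigenvalues) i := by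
        funext i
        simp only [Function.comp_apply]
        rw [← Complex.ofReal_mul, abs_mul_abs_self]
        push_cast
        rfl
      rw [hfun]
      exact e.symm
    rw [traceNorm_of_eq_sqrt hB hBB, trace_unitary_conj h1, trace_diagonal, Complex.re_sum]
    apply Finset.sum_congr rfl
    intro i _
    rfl


/-! ### Frobenius comparison -/

section Frob

attribute [local instance] Matrix.frobeniusNormedAddCommGroup Matrix.frobeniusNormedSpace

lemma re_sum_sq (s : n → ℝ) : (∑ i, ((s i : ℂ))^2).re = ∑ i, (s i)^2 := by
  rw [Complex.re_sum]
  apply Finset.sum_congr rfl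
  intro i _
  rw [← Complex.ofReal_pow, Complex.ofReal_re]

lemma frob_norm_eq (A : Matrix n n ℂ) : ‖A‖ = Real.sqrt ((Aᴴ * A).trace.re) := by
  have h1 : ((Aᴴ * A).trace).re = ∑ i, ∑ j, ‖A i j‖ ^ (2:ℝ) := by
    simp only [Matrix.trace, Matrix.diag, mul_apply, conjTranspose_apply, Complex.re_sum]
    rw [Finset.sum_comm]
    apply Finset.sum_congr rfl
    intro i _
    apply Finset.sum_congr rfl
    intro j _
    rw [RCLike.star_def, ← Complex.normSq_eq_conj_mul_self, Complex.ofReal_re,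
      ← Complex.sq_norm, Real.rpow_two]
  rw [Matrix.frobenius_norm_def, h1, Real.sqrt_eq_rpow]

lemma frob_le_traceNorm (A : Matrix n n ℂ) : ‖A‖ ≤ traceNorm A := by
  obtain ⟨s, U, hs, h1, h2, htn, hAA⟩ := exists_sv A
  rw [frob_norm_eq, hAA, trace_unitary_conj h1, trace_diagonal, htn, re_sum_sq]
  have hle : ∑ i, (s i)^2 ≤ (∑ i, s i)^2 := by
    calc ∑ i, (s i)^2 ≤ ∑ i, (s i * ∑ j, s j) := by
          apply Finset.sum_le_sum
          intro i _
          rw [pow_two]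
          exact mul_le_mul_of_nonneg_left
            (Finset.single_le_sum (fun j _ => hs j) (Finset.mem_univ i)) (hs i)
      _ = (∑ i, s i)^2 := by rw [← Finset.sum_mul, pow_two]
  calc Real.sqrt (∑ i, (s i)^2) ≤ Real.sqrt ((∑ i, s i)^2) := Real.sqrt_le_sqrt hle
    _ = ∑ i, s i := Real.sqrt_sq (Finset.sum_nonneg fun i _ => hs i)

lemma traceNorm_le_frob (A : Matrix n n ℂ) :
    traceNorm A ≤ Real.sqrt (Fintype.card n) * ‖A‖ := by
  obtain ⟨s, U, hs, h1, h2, htn, hAA⟩ := exists_sv A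
  rw [frob_norm_eq, hAA, trace_unitary_conj h1, trace_diagonal, htn, re_sum_sq]
  have hc : (∑ i, s i)^2 ≤ (Fintype.card n : ℝ) * ∑ i, (s i)^2 := by
    simpa using sq_sum_le_card_mul_sum_sq (s := Finset.univ) (f := s)
  calc ∑ i, s i = Real.sqrt ((∑ i, s i)^2) :=
        (Real.sqrt_sq (Finset.sum_nonneg fun i _ => hs i)).symm
    _ ≤ Real.sqrt ((Fintype.card n : ℝ) * ∑ i, (s i)^2) := Real.sqrt_le_sqrt hc
    _ = Real.sqrt (Fintype.card n) * Real.sqrt (∑ i, (s i)^2) :=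
        Real.sqrt_mul (by positivity) _

lemma traceNorm_pos {A : Matrix n n ℂ} (h : A ≠ 0) : 0 < traceNorm A :=
  lt_of_lt_of_le (norm_pos_iff.mpr h) (frob_le_traceNorm A)

lemma exists_traceNorm_bound (T : Matrix n n ℂ →ₗ[ℂ] Matrix m m ℂ) :
    ∃ C : ℝ, 0 ≤ C ∧ ∀ X, traceNorm (T X) ≤ C * traceNorm X := by
  obtain ⟨K, hK, hKb⟩ :=
    SemilinearMapClass.bound_of_continuous T (LinearMap.continuous_of_finiteDimensional T)
  refine ⟨Real.sqrt (Fintype.card m) * K, by positivity, fun X => ?_⟩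
  have h1 := traceNorm_le_frob (T X)
  have h2 : ‖T X‖ ≤ K * ‖X‖ := hKb X
  have h3 := frob_le_traceNorm X
  have h4 : ‖T X‖ ≤ K * traceNorm X :=
    le_trans h2 (mul_le_mul_of_nonneg_left h3 hK.le)
  calc traceNorm (T X) ≤ Real.sqrt (Fintype.card m) * ‖T X‖ := h1
    _ ≤ Real.sqrt (Fintype.card m) * (K * traceNorm X) :=
        mul_le_mul_of_nonneg_left h4 (Real.sqrt_nonneg _)
    _ = Real.sqrt (Fintype.card m) * K * traceNorm X := by ring

end Frob

/-! ### embedding M_d into M_{d^2} -/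

section Embed
variable {d : ℕ}

def embedM (i0 : Fin d) (B : Matrix (Fin d) (Fin d) ℂ) :
    Matrix (Fin d × Fin d) (Fin d × Fin d) ℂ :=
  Matrix.of fun p q => if p.2 = i0 ∧ q.2 = i0 then B p.1 q.1 else 0

lemma embedM_mul (i0 : Fin d) (B C : Matrix (Fin d) (Fin d) ℂ) :
    embedM i0 B * embedM i0 C = embedM i0 (B * C) := by
  ext ⟨a, i⟩ ⟨b, j⟩
  simp only [embedM, of_apply, mul_apply, Fintype.sum_prod_type]
  by_cases hi : i = i0 <;> by_cases hj : j = i0 <;>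
    simp [hi, hj, Finset.sum_ite_eq', mul_ite, ite_mul, Finset.sum_comm]

lemma embedM_conjTranspose (i0 : Fin d) (B : Matrix (Fin d) (Fin d) ℂ) :
    (embedM i0 B)ᴴ = embedM i0 Bᴴ := by
  ext ⟨a, i⟩ ⟨b, j⟩
  by_cases hi : i = i0 <;> by_cases hj : j = i0 <;>
    simp [embedM, conjTranspose_apply, hi, hj]

lemma embedM_trace (i0 : Fin d) (B : Matrix (Fin d) (Fin d) ℂ) :
    (embedM i0 B).trace = B.trace := by
  simp [Matrix.trace, Matrix.diag, embedM, Fintype.sum_prod_type, Finset.sum_ite_eq',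
    Finset.sum_comm]

lemma embedM_posSemidef (i0 : Fin d) {B : Matrix (Fin d) (Fin d) ℂ} (hB : B.PosSemidef) :
    (embedM i0 B).PosSemidef := by
  obtain ⟨C, hC⟩ : ∃ C : Matrix (Fin d) (Fin d) ℂ, B = Cᴴ * C :=
    ⟨hB.sqrt, by rw [hB.posSemidef_sqrt.1.eq, hB.sqrt_mul_self]⟩
  rw [hC, ← embedM_mul, ← embedM_conjTranspose]
  exact Matrix.posSemidef_conjTranspose_mul_self _

lemma traceNorm_embedM (i0 : Fin d) (B : Matrix (Fin d) (Fin d) ℂ) :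
    traceNorm (embedM i0 B) = traceNorm B := by
  have hP := Matrix.posSemidef_conjTranspose_mul_self B
  have hS := hP.posSemidef_sqrt
  have hBB : embedM i0 hP.sqrt * embedM i0 hP.sqrt = (embedM i0 B)ᴴ * embedM i0 B := by
    rw [embedM_mul, hP.sqrt_mul_self, embedM_conjTranspose, embedM_mul]
  rw [traceNorm_of_eq_sqrt (embedM_posSemidef i0 hS) hBB, embedM_trace]
  rfl

lemma tensorId_embedM (Ψ : Matrix (Fin d) (Fin d) ℂ →ₗ[ℂ] Matrix (Fin d) (Fin d) ℂ)
    (i0 : Fin d) (B : Matrix (Fin d) (Fin d) ℂ) :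
    tensorId d Ψ (embedM i0 B) = embedM i0 (Ψ B) := by
  ext ⟨a, i⟩ ⟨b, j⟩
  show Ψ (Matrix.of fun a' b' => embedM i0 B (a', i) (b', j)) a b
      = embedM i0 (Ψ B) (a, i) (b, j)
  have e : (Matrix.of fun a' b' => embedM i0 B (a', i) (b', j))
      = if i = i0 ∧ j = i0 then B else 0 := by
    split_ifs with h
    · ext a' b'; simp [embedM, h]
    · ext a' b'; simp [embedM, h]
  rw [e]
  split_ifs with h
  · simp [embedM, h]
  · simp [embedM, h]

def tensorIdL (d : ℕ) (Ψ : Matrix (Fin d) (Fin d) ℂ →ₗ[ℂ] Matrix (Fin d) (Fin d) ℂ) :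
    Matrix (Fin d × Fin d) (Fin d × Fin d) ℂ →ₗ[ℂ] Matrix (Fin d × Fin d) (Fin d × Fin d) ℂ where
  toFun := tensorId d Ψ
  map_add' X Y := by
    ext p q
    have e : (Matrix.of fun a b => (X + Y) (a, p.2) (b, q.2))
        = (Matrix.of fun a b => X (a, p.2) (b, q.2))
          + (Matrix.of fun a b => Y (a, p.2) (b, q.2)) := by
      ext a b; simp
    show Ψ _ p.1 q.1 = _
    rw [e, map_add]
    rfl
  map_smul' c X := by
    ext p q
    have e : (Matrix.of fun a b => (c • X) (a, p.2) (b, q.2))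
        = c • (Matrix.of fun a b => X (a, p.2) (b, q.2)) := by
      ext a b; simp
    show Ψ _ p.1 q.1 = _
    rw [e, _root_.map_smul]
    rfl

lemma tensorIdL_apply (d : ℕ) (Ψ : Matrix (Fin d) (Fin d) ℂ →ₗ[ℂ] Matrix (Fin d) (Fin d) ℂ)
    (X : Matrix (Fin d × Fin d) (Fin d × Fin d) ℂ) : tensorIdL d Ψ X = tensorId d Ψ X := rfl

end Embed

/-! ### rank one projections -/

lemma vecMulVec_posSemidef (x : n → ℂ) : (vecMulVec x (star x)).PosSemidef := by
  refine Matrix.PosSemidef.of_dotProduct_mulVec_nonneg ?_ ?_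
  · show (vecMulVec x (star x))ᴴ = _
    rw [vecMulVec_conjTranspose, star_star]
  · intro v
    rw [vecMulVec_mulVec, dotProduct_smul, smul_eq_mul]
    have e : star x ⬝ᵥ v = star (star v ⬝ᵥ x) := by
      simp only [dotProduct, star_sum, star_mul', star_star, Pi.star_apply]
      apply Finset.sum_congr rfl
      intro i _
      ring
    rw [e]
    exact star_mul_self_nonneg _

lemma vecMulVec_trace (x : n → ℂ) :
    (vecMulVec x (star x)).trace = ((∑ i, Complex.normSq (x i) : ℝ) : ℂ) := by
  simp only [Matrix.trace, Matrix.diag, vecMulVec_apply, Pi.star_apply, Complex.ofReal_sum]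
  apply Finset.sum_congr rfl
  intro i _
  rw [Complex.star_def, Complex.mul_conj]

lemma traceNorm_vecMulVec {x : n → ℂ} (hx : ∑ i, Complex.normSq (x i) = 1) :
    traceNorm (vecMulVec x (star x)) = 1 := by
  rw [traceNorm_of_posSemidef (vecMulVec_posSemidef x), vecMulVec_trace, hx]
  simp

end TN

open TN in
/-- For a linear map `Φ` on `M_d(ℂ)`: (i) its trace-norm Lipschitz constant on density
matrices is bounded by `sup_{‖x‖=1} ‖Φ(|x⟩⟨x|) − 𝟙/d‖₁`, (ii) the latter is bounded by
`‖Φ − Φ_*‖_◇`, and consequently (iii) the Lipschitz constant is at most `‖Φ − Φ_*‖_◇`. -/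
theorem lipschitz_constant_le_diamond_norm (d : ℕ) (hd : 0 < d)
    (Φ : Matrix (Fin d) (Fin d) ℂ →ₗ[ℂ] Matrix (Fin d) (Fin d) ℂ) :
    (∀ ρ σ : Matrix (Fin d) (Fin d) ℂ,
      ρ.PosSemidef → ρ.trace = 1 → σ.PosSemidef → σ.trace = 1 →
      traceNorm (Φ ρ - Φ σ) ≤ traceNorm (ρ - σ) *
        ⨆ x : {x : Fin d → ℂ // ∑ i, Complex.normSq (x i) = 1},
          traceNorm (Φ (vecMulVec x.1 (star x.1)) - (d : ℂ)⁻¹ • 1)) ∧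
    ((⨆ x : {x : Fin d → ℂ // ∑ i, Complex.normSq (x i) = 1},
        traceNorm (Φ (vecMulVec x.1 (star x.1)) - (d : ℂ)⁻¹ • 1)) ≤
      diamondNorm d (Φ - depolarizing d)) ∧
    (∀ ρ σ : Matrix (Fin d) (Fin d) ℂ,
      ρ.PosSemidef → ρ.trace = 1 → σ.PosSemidef → σ.trace = 1 →
      traceNorm (Φ ρ - Φ σ) ≤ diamondNorm d (Φ - depolarizing d) * traceNorm (ρ - σ)) := by
  classical
  have i0 : Fin d := ⟨0, hd⟩
  haveI hne : Nonempty {x : Fin d → ℂ // ∑ i, Complex.normSq (x i) = 1} := by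
    refine ⟨⟨Pi.single i0 1, ?_⟩⟩
    simp [Pi.single_apply, apply_ite Complex.normSq, Finset.sum_ite_eq']
  obtain ⟨CΦ, hCΦ0, hCΦ⟩ := TN.exists_traceNorm_bound Φ
  have hBddS : BddAbove (Set.range fun x : {x : Fin d → ℂ // ∑ i, Complex.normSq (x i) = 1} =>
      traceNorm (Φ (vecMulVec x.1 (star x.1)) - (d : ℂ)⁻¹ • 1)) := by
    refine ⟨CΦ * 1 + traceNorm ((d : ℂ)⁻¹ • (1 : Matrix (Fin d) (Fin d) ℂ)), ?_⟩
    rintro r ⟨x, rfl⟩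
    calc traceNorm (Φ (vecMulVec x.1 (star x.1)) - (d : ℂ)⁻¹ • 1)
        ≤ traceNorm (Φ (vecMulVec x.1 (star x.1)))
            + traceNorm ((d : ℂ)⁻¹ • (1 : Matrix (Fin d) (Fin d) ℂ)) := traceNorm_sub_le _ _
      _ ≤ CΦ * traceNorm (vecMulVec x.1 (star x.1))
            + traceNorm ((d : ℂ)⁻¹ • (1 : Matrix (Fin d) (Fin d) ℂ)) :=
          add_le_add (hCΦ _) le_rfl
      _ = CΦ * 1 + traceNorm ((d : ℂ)⁻¹ • (1 : Matrix (Fin d) (Fin d) ℂ)) := by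
          rw [traceNorm_vecMulVec x.2]
  have part1 : ∀ ρ σ : Matrix (Fin d) (Fin d) ℂ,
      ρ.PosSemidef → ρ.trace = 1 → σ.PosSemidef → σ.trace = 1 →
      traceNorm (Φ ρ - Φ σ) ≤ traceNorm (ρ - σ) *
        ⨆ x : {x : Fin d → ℂ // ∑ i, Complex.normSq (x i) = 1},
          traceNorm (Φ (vecMulVec x.1 (star x.1)) - (d : ℂ)⁻¹ • 1) := by
    intro ρ σ hρ hρt hσ hσt
    have hherm : (ρ - σ).IsHermitian := hρ.1.sub hσ.1
    obtain ⟨lam, u, hunit, hdec, htr, htnd⟩ := TN.isHermitian_decomp hherm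
    have hlam0 : ((∑ i, lam i : ℝ) : ℂ) = 0 := by
      rw [← htr, trace_sub, hρt, hσt, sub_self]
    have hrepr : Φ ρ - Φ σ
        = ∑ i, ((lam i : ℝ) : ℂ) •
            (Φ (vecMulVec (u i) (star (u i))) - (d : ℂ)⁻¹ • 1) := by
      rw [← map_sub]
      conv_lhs => rw [hdec]
      rw [map_sum]
      simp only [_root_.map_smul, smul_sub]
      rw [Finset.sum_sub_distrib, ← Finset.sum_smul, ← Complex.ofReal_sum, hlam0, zero_smul,
        sub_zero]
    rw [hrepr]
    refine le_trans (TN.traceNorm_sum_le _ _) ?_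
    have hterm : ∀ i, traceNorm (((lam i : ℝ) : ℂ) •
        (Φ (vecMulVec (u i) (star (u i))) - (d : ℂ)⁻¹ • 1)) ≤ |lam i| *
          ⨆ x : {x : Fin d → ℂ // ∑ i, Complex.normSq (x i) = 1},
            traceNorm (Φ (vecMulVec x.1 (star x.1)) - (d : ℂ)⁻¹ • 1) := by
      intro i
      rw [TN.traceNorm_smul, Complex.norm_real, Real.norm_eq_abs]
      refine mul_le_mul_of_nonneg_left ?_ (abs_nonneg _)
      exact le_ciSup hBddS ⟨u i, hunit i⟩
    refine le_trans (Finset.sum_le_sum fun i _ => hterm i) ?_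
    rw [← Finset.sum_mul, ← htnd]
  obtain ⟨CT, hCT0, hCT⟩ := TN.exists_traceNorm_bound (TN.tensorIdL d (Φ - depolarizing d))
  have hBddD : BddAbove (Set.range fun X : {X : Matrix (Fin d × Fin d) (Fin d × Fin d) ℂ // X ≠ 0} =>
      traceNorm (tensorId d (Φ - depolarizing d) X.1) / traceNorm X.1) := by
    refine ⟨CT, ?_⟩
    rintro r ⟨X, rfl⟩
    rw [div_le_iff₀ (TN.traceNorm_pos X.2)]
    exact hCT X.1
  have part2 : (⨆ x : {x : Fin d → ℂ // ∑ i, Complex.normSq (x i) = 1},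
        traceNorm (Φ (vecMulVec x.1 (star x.1)) - (d : ℂ)⁻¹ • 1)) ≤
      diamondNorm d (Φ - depolarizing d) := by
    apply ciSup_le
    intro x
    have hxx1 : (vecMulVec x.1 (star x.1)).trace = 1 := by
      rw [TN.vecMulVec_trace, x.2]
      simp
    have heq : Φ (vecMulVec x.1 (star x.1)) - (d : ℂ)⁻¹ • 1
        = (Φ - depolarizing d) (vecMulVec x.1 (star x.1)) := by
      simp only [LinearMap.sub_apply, depolarizing, LinearMap.smulRight_apply,
        Matrix.traceLinearMap_apply]
      rw [hxx1, one_smul]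
    have hXtn : traceNorm (TN.embedM i0 (vecMulVec x.1 (star x.1))) = 1 := by
      rw [TN.traceNorm_embedM, TN.traceNorm_vecMulVec x.2]
    have hX0 : TN.embedM i0 (vecMulVec x.1 (star x.1)) ≠ 0 := by
      intro h
      rw [h, TN.traceNorm_zero] at hXtn
      norm_num at hXtn
    have hval : traceNorm (tensorId d (Φ - depolarizing d) (TN.embedM i0 (vecMulVec x.1 (star x.1))))
        / traceNorm (TN.embedM i0 (vecMulVec x.1 (star x.1)))
        = traceNorm ((Φ - depolarizing d) (vecMulVec x.1 (star x.1))) := by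
      rw [TN.tensorId_embedM, TN.traceNorm_embedM, hXtn, div_one]
    rw [heq, ← hval]
    exact le_ciSup hBddD ⟨TN.embedM i0 (vecMulVec x.1 (star x.1)), hX0⟩
  refine ⟨part1, part2, ?_⟩
  intro ρ σ hρ hρt hσ hσt
  calc traceNorm (Φ ρ - Φ σ)
      ≤ traceNorm (ρ - σ) *
        ⨆ x : {x : Fin d → ℂ // ∑ i, Complex.normSq (x i) = 1},
          traceNorm (Φ (vecMulVec x.1 (star x.1)) - (d : ℂ)⁻¹ • 1) :=
        part1 ρ σ hρ hρt hσ hσt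
    _ ≤ traceNorm (ρ - σ) * diamondNorm d (Φ - depolarizing d) :=
        mul_le_mul_of_nonneg_left part2 (TN.traceNorm_nonneg _)
    _ = diamondNorm d (Φ - depolarizing d) * traceNorm (ρ - σ) := mul_comm _ _
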